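/- Let L > 0, N ∈ ℕ, and let ((Q_n)_{n=1}^N, (E_n)_{n=1}^N) be positive reals with Σ(Q_n + E_n) = L and Σ Q_n < L/2. Define D_n = min_{0≤k≤N−1} Σ_{ℓ=1}^k (E_{n−ℓ} − Q_{n−ℓ}) (indices mod N), (𝒯Q)_n = min{Q_n − D_n, E_n}, (𝒯E)_n = E_n + Q_{n+1} − (𝒯Q)_n (indices mod N). Then Σ_{n=1}^N (𝒯Q)_n = Σ_{n=1}^N Q_n and Σ_{n=1}^N ((𝒯Q)_n + (𝒯E)_n) = L, and moreover (𝒯Q)_n > 0 and (𝒯E)_n > 0 for all n. -/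

import Mathlib

/-- Convert a sum over `Finset.Icc (1:ℤ) k` to a sum over `Finset.range k`. -/
lemma iccRange (g : ℤ → ℝ) (k : ℕ) :
    ∑ ℓ ∈ Finset.Icc (1:ℤ) (k:ℤ), g ℓ = ∑ j ∈ Finset.range k, g ((j:ℤ)+1) := by
  induction k with
  | zero => simp
  | succ k ih =>
    have h1 : Finset.Icc (1:ℤ) ((k+1:ℕ):ℤ) = insert ((k:ℤ)+1) (Finset.Icc 1 (k:ℤ)) := by
      ext x; simp [Finset.mem_Icc]; omega
    have h2 : ((k:ℤ)+1) ∉ Finset.Icc (1:ℤ) (k:ℤ) := by simp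
    rw [h1, Finset.sum_insert h2, ih, Finset.sum_range_succ]
    ring

/-- Reflection of a sum over `Finset.Icc (1:ℤ) N`. -/
lemma reflSum (N : ℕ) (g : ℤ → ℝ) :
    ∑ ℓ ∈ Finset.Icc (1:ℤ) (N:ℤ), g ℓ = ∑ ℓ ∈ Finset.Icc (1:ℤ) (N:ℤ), g ((N:ℤ)+1-ℓ) := by
  apply Finset.sum_nbij' (fun ℓ => (N:ℤ)+1-ℓ) (fun ℓ => (N:ℤ)+1-ℓ)
  · intro a ha; simp [Finset.mem_Icc] at *; omega
  · intro a ha; simp [Finset.mem_Icc] at *; omega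
  · intro a _; ring
  · intro a _; ring
  · intro a _; congr 1; ring

/-- A window sum of length `N` of an `N`-periodic function is constant. -/
lemma windowConst (N : ℕ) (hN : 1 ≤ N) (f : ℤ → ℝ) (hf : ∀ n, f (n + N) = f n) (n : ℤ) :
    ∑ j ∈ Finset.range N, f (n - 1 - (j:ℤ)) = ∑ m ∈ Finset.Icc (1:ℤ) (N:ℤ), f m := by
  obtain ⟨M, rfl⟩ : ∃ M, N = M + 1 := ⟨N - 1, by omega⟩
  have step : ∀ m : ℤ, (∑ j ∈ Finset.range (M+1), f (m + 1 - 1 - (j:ℤ)))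
      = ∑ j ∈ Finset.range (M+1), f (m - 1 - (j:ℤ)) := by
    intro m
    have l1 : (∑ j ∈ Finset.range (M+1), f (m + 1 - 1 - (j:ℤ)))
        = (∑ j ∈ Finset.range M, f (m - 1 - (j:ℤ))) + f m := by
      rw [Finset.sum_range_succ' (fun j : ℕ => f (m + 1 - 1 - (j:ℤ))) M]
      congr 1
      · apply Finset.sum_congr rfl; intro j _; congr 1; push_cast; ring
      · congr 1; ring
    have l2 : (∑ j ∈ Finset.range (M+1), f (m - 1 - (j:ℤ)))
        = (∑ j ∈ Finset.range M, f (m - 1 - (j:ℤ))) + f (m - 1 - (M:ℤ)) := by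
      rw [Finset.sum_range_succ]
    have l3 : f (m - 1 - (M:ℤ)) = f m := by
      have := hf (m - 1 - (M:ℤ))
      rw [show m - 1 - (M:ℤ) + ((M+1:ℕ):ℤ) = m by push_cast; ring] at this
      exact this.symm
    rw [l1, l2, l3]
  set g : ℤ → ℝ := fun m => ∑ j ∈ Finset.range (M+1), f (m - 1 - (j:ℤ)) with hg
  have step' : ∀ m : ℤ, g (m + 1) = g m := fun m => step m
  have const : ∀ m : ℤ, g m = g 0 := by
    intro m
    induction m using Int.induction_on with
    | zero => rfl
    | succ k ih => rw [step' k, ih]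
    | pred k ih =>
      have h := step' (-(k:ℤ) - 1)
      rw [show -(k:ℤ) - 1 + 1 = -(k:ℤ) by ring] at h
      rw [← h, ih]
  have base : g (((M+1:ℕ):ℤ) + 1) = ∑ m ∈ Finset.Icc (1:ℤ) ((M+1:ℕ):ℤ), f m := by
    rw [reflSum (M+1) f, iccRange (fun ℓ => f (((M+1:ℕ):ℤ)+1-ℓ)) (M+1)]
    show _ = (∑ j ∈ Finset.range (M+1), f (((M+1:ℕ):ℤ)+1-((j:ℤ)+1)))
    apply Finset.sum_congr rfl
    intro j _
    congr 1; push_cast; ring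
  calc (∑ j ∈ Finset.range (M+1), f (n - 1 - (j:ℤ))) = g n := rfl
    _ = g 0 := const n
    _ = g (((M+1:ℕ):ℤ) + 1) := (const _).symm
    _ = _ := base

/-- `D_n = min_{0 ≤ k ≤ N-1} ∑_{ℓ=1}^k (E_{n-ℓ} - Q_{n-ℓ})`. -/
noncomputable def Dfun (N : ℕ) (Q E : ℤ → ℝ) (n : ℤ) : ℝ :=
  sInf {s : ℝ | ∃ k : ℕ, k < N ∧
    s = ∑ ℓ ∈ Finset.Icc (1:ℤ) (k:ℤ), (E (n - ℓ) - Q (n - ℓ))}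

/-- The partial sums appearing in `Dfun`, written over `Finset.range`. -/
noncomputable def Sfun (Q E : ℤ → ℝ) (n : ℤ) (k : ℕ) : ℝ :=
  ∑ j ∈ Finset.range k, (E (n - 1 - (j:ℤ)) - Q (n - 1 - (j:ℤ)))

lemma Sfun_zero (Q E : ℤ → ℝ) (n : ℤ) : Sfun Q E n 0 = 0 := by simp [Sfun]

lemma Sfun_succ (Q E : ℤ → ℝ) (n : ℤ) (k : ℕ) :
    Sfun Q E (n+1) (k+1) = (E n - Q n) + Sfun Q E n k := by
  unfold Sfun
  rw [Finset.sum_range_succ'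
    (fun j : ℕ => E (n + 1 - 1 - (j:ℤ)) - Q (n + 1 - 1 - (j:ℤ))) k]
  have h0 : E (n + 1 - 1 - ((0:ℕ):ℤ)) - Q (n + 1 - 1 - ((0:ℕ):ℤ)) = E n - Q n := by
    norm_num
  have hsum : (∑ j ∈ Finset.range k,
      (E (n + 1 - 1 - ((j+1:ℕ):ℤ)) - Q (n + 1 - 1 - ((j+1:ℕ):ℤ))))
      = ∑ j ∈ Finset.range k, (E (n - 1 - (j:ℤ)) - Q (n - 1 - (j:ℤ))) := by
    apply Finset.sum_congr rfl
    intro j _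
    have h : n + 1 - 1 - ((j+1:ℕ):ℤ) = n - 1 - (j:ℤ) := by push_cast; ring
    rw [h]
  rw [h0, hsum, add_comm]

lemma icc_eq_Sfun (Q E : ℤ → ℝ) (n : ℤ) (k : ℕ) :
    ∑ ℓ ∈ Finset.Icc (1:ℤ) (k:ℤ), (E (n - ℓ) - Q (n - ℓ)) = Sfun Q E n k := by
  rw [iccRange (fun ℓ => E (n - ℓ) - Q (n - ℓ)) k]
  unfold Sfun
  apply Finset.sum_congr rfl
  intro j _
  have h : n - ((j:ℤ)+1) = n - 1 - (j:ℤ) := by ring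
  show E (n - ((j:ℤ)+1)) - Q (n - ((j:ℤ)+1)) = _
  rw [h]

lemma Dfun_eq (N : ℕ) (Q E : ℤ → ℝ) (n : ℤ) :
    Dfun N Q E n = sInf (Sfun Q E n '' Set.Iio N) := by
  unfold Dfun
  congr 1
  ext s
  simp only [Set.mem_setOf_eq, Set.mem_image, Set.mem_Iio]
  constructor
  · rintro ⟨k, hk, rfl⟩; exact ⟨k, hk, (icc_eq_Sfun Q E n k).symm⟩
  · rintro ⟨k, hk, rfl⟩; exact ⟨k, hk, (icc_eq_Sfun Q E n k).symm⟩

lemma Dfun_le (N : ℕ) (Q E : ℤ → ℝ) (n : ℤ) (k : ℕ) (hk : k < N) :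
    Dfun N Q E n ≤ Sfun Q E n k := by
  rw [Dfun_eq]
  exact csInf_le (((Set.finite_Iio N).image _).bddBelow) ⟨k, hk, rfl⟩

lemma Dfun_mem (N : ℕ) (hN : 0 < N) (Q E : ℤ → ℝ) (n : ℤ) :
    ∃ k : ℕ, k < N ∧ Dfun N Q E n = Sfun Q E n k := by
  rw [Dfun_eq]
  have hne : (Sfun Q E n '' Set.Iio N).Nonempty := ⟨Sfun Q E n 0, ⟨0, hN, rfl⟩⟩
  obtain ⟨k, hk, hke⟩ := hne.csInf_mem ((Set.finite_Iio N).image _)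
  exact ⟨k, hk, hke.symm⟩

lemma Dfun_nonpos (N : ℕ) (hN : 0 < N) (Q E : ℤ → ℝ) (n : ℤ) :
    Dfun N Q E n ≤ 0 := by
  have h := Dfun_le N Q E n 0 hN
  rwa [Sfun_zero] at h

lemma Sfun_per (N : ℕ) (Q E : ℤ → ℝ)
    (hQper : ∀ n : ℤ, Q (n + N) = Q n) (hEper : ∀ n : ℤ, E (n + N) = E n)
    (n : ℤ) (k : ℕ) : Sfun Q E (n + N) k = Sfun Q E n k := by
  unfold Sfun
  apply Finset.sum_congr rfl
  intro j _
  have h : n + (N:ℤ) - 1 - (j:ℤ) = (n - 1 - (j:ℤ)) + (N:ℤ) := by ring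
  rw [h, hQper, hEper]

lemma Dfun_per (N : ℕ) (Q E : ℤ → ℝ)
    (hQper : ∀ n : ℤ, Q (n + N) = Q n) (hEper : ∀ n : ℤ, E (n + N) = E n)
    (n : ℤ) : Dfun N Q E (n + N) = Dfun N Q E n := by
  rw [Dfun_eq, Dfun_eq]
  congr 1
  exact Set.image_congr (fun k _ => Sfun_per N Q E hQper hEper n k)

lemma Sfun_full (N : ℕ) (hN : 1 ≤ N) (Q E : ℤ → ℝ)
    (hQper : ∀ n : ℤ, Q (n + N) = Q n) (hEper : ∀ n : ℤ, E (n + N) = E n)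
    (n : ℤ) : Sfun Q E n N = ∑ m ∈ Finset.Icc (1:ℤ) (N:ℤ), (E m - Q m) := by
  unfold Sfun
  exact windowConst N hN (fun m => E m - Q m)
    (fun m => by rw [hQper, hEper]) n

lemma Dfun_rec (N : ℕ) (hN : 1 ≤ N) (Q E : ℤ → ℝ)
    (hQper : ∀ n : ℤ, Q (n + N) = Q n) (hEper : ∀ n : ℤ, E (n + N) = E n)
    (hT : 0 < ∑ m ∈ Finset.Icc (1:ℤ) (N:ℤ), (E m - Q m)) (n : ℤ) :
    Dfun N Q E (n+1) = min 0 ((E n - Q n) + Dfun N Q E n) := by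
  have hN0 : 0 < N := hN
  apply le_antisymm
  · apply le_min
    · exact Dfun_nonpos N hN0 Q E (n+1)
    · rcases le_or_gt 0 ((E n - Q n) + Dfun N Q E n) with hc | hc
      · exact le_trans (Dfun_nonpos N hN0 Q E (n+1)) hc
      · obtain ⟨k, hk, hke⟩ := Dfun_mem N hN0 Q E n
        rcases Nat.lt_or_ge (k+1) N with hk1 | hk1
        · have h := Dfun_le N Q E (n+1) (k+1) hk1
          rw [Sfun_succ] at h
          rw [hke]
          exact h
        · exfalso
          have hkN : k + 1 = N := by omega
          have h1 : (E n - Q n) + Dfun N Q E n = Sfun Q E (n+1) N := by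
            rw [hke, ← Sfun_succ, hkN]
          rw [Sfun_full N hN Q E hQper hEper (n+1)] at h1
          linarith
  · obtain ⟨k, hk, hke⟩ := Dfun_mem N hN0 Q E (n+1)
    rcases k with _ | j
    · rw [hke, Sfun_zero]
      exact min_le_left _ _
    · rw [hke, Sfun_succ]
      have h := Dfun_le N Q E n j (by omega)
      calc min 0 ((E n - Q n) + Dfun N Q E n) ≤ (E n - Q n) + Dfun N Q E n :=
            min_le_right _ _
        _ ≤ (E n - Q n) + Sfun Q E n j := by linarith

theorem periodic_toda_preservation (N : ℕ) (hN : 1 ≤ N) (L : ℝ) (hL : 0 < L)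
    (Q E TQ TE : ℤ → ℝ)
    (hQpos : ∀ n, 0 < Q n) (hEpos : ∀ n, 0 < E n)
    (hQper : ∀ n, Q (n + N) = Q n) (hEper : ∀ n, E (n + N) = E n)
    (hsum : ∑ n ∈ Finset.Icc (1:ℤ) (N:ℤ), (Q n + E n) = L)
    (hhalf : ∑ n ∈ Finset.Icc (1:ℤ) (N:ℤ), Q n < L / 2)
    (hTQ : ∀ n, TQ n = min (Q n - Dfun N Q E n) (E n))
    (hTE : ∀ n, TE n = E n + Q (n + 1) - TQ n) :
    (∑ n ∈ Finset.Icc (1:ℤ) (N:ℤ), TQ n = ∑ n ∈ Finset.Icc (1:ℤ) (N:ℤ), Q n) ∧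
    (∑ n ∈ Finset.Icc (1:ℤ) (N:ℤ), (TQ n + TE n) = L) ∧
    (∀ n, 0 < TQ n) ∧ (∀ n, 0 < TE n) := by
  have hN0 : 0 < N := hN
  -- positivity of the total drift
  have hsplit : ∑ n ∈ Finset.Icc (1:ℤ) (N:ℤ), (Q n + E n)
      = (∑ n ∈ Finset.Icc (1:ℤ) (N:ℤ), Q n) + ∑ n ∈ Finset.Icc (1:ℤ) (N:ℤ), E n :=
    Finset.sum_add_distrib
  have hTsub : ∑ m ∈ Finset.Icc (1:ℤ) (N:ℤ), (E m - Q m)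
      = (∑ n ∈ Finset.Icc (1:ℤ) (N:ℤ), E n) - ∑ n ∈ Finset.Icc (1:ℤ) (N:ℤ), Q n :=
    Finset.sum_sub_distrib _ _
  have hT : 0 < ∑ m ∈ Finset.Icc (1:ℤ) (N:ℤ), (E m - Q m) := by
    rw [hTsub]; rw [hsplit] at hsum; linarith
  have hrec : ∀ n : ℤ, Dfun N Q E (n+1) = min 0 ((E n - Q n) + Dfun N Q E n) :=
    Dfun_rec N hN Q E hQper hEper hT
  have hDnp : ∀ n : ℤ, Dfun N Q E n ≤ 0 := Dfun_nonpos N hN0 Q E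
  -- pointwise telescoping formula
  have hTQ' : ∀ n : ℤ, TQ n = Q n + (Dfun N Q E (n+1) - Dfun N Q E n) := by
    intro n
    rw [hTQ n, hrec n]
    rcases le_or_gt 0 ((E n - Q n) + Dfun N Q E n) with hc | hc
    · rw [min_eq_left hc, min_eq_left (by linarith)]
      ring
    · rw [min_eq_right hc.le, min_eq_right (by linarith)]
      ring
  -- claim 1
  have htel : ∑ n ∈ Finset.Icc (1:ℤ) (N:ℤ), (Dfun N Q E (n+1) - Dfun N Q E n) = 0 := by
    rw [iccRange (fun ℓ => Dfun N Q E (ℓ+1) - Dfun N Q E ℓ) N]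
    have h := Finset.sum_range_sub (fun j : ℕ => Dfun N Q E ((j:ℤ)+1)) N
    push_cast at h
    rw [h, show ((N:ℤ)+1) = 1 + (N:ℤ) by ring, Dfun_per N Q E hQper hEper 1]
    norm_num
  have claim1 : ∑ n ∈ Finset.Icc (1:ℤ) (N:ℤ), TQ n
      = ∑ n ∈ Finset.Icc (1:ℤ) (N:ℤ), Q n := by
    calc ∑ n ∈ Finset.Icc (1:ℤ) (N:ℤ), TQ n
        = ∑ n ∈ Finset.Icc (1:ℤ) (N:ℤ), (Q n + (Dfun N Q E (n+1) - Dfun N Q E n)) :=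
          Finset.sum_congr rfl (fun n _ => hTQ' n)
      _ = (∑ n ∈ Finset.Icc (1:ℤ) (N:ℤ), Q n)
          + ∑ n ∈ Finset.Icc (1:ℤ) (N:ℤ), (Dfun N Q E (n+1) - Dfun N Q E n) :=
          Finset.sum_add_distrib
      _ = ∑ n ∈ Finset.Icc (1:ℤ) (N:ℤ), Q n := by rw [htel, add_zero]
  -- claims 3 and 4
  have claim3 : ∀ n : ℤ, 0 < TQ n := by
    intro n
    rw [hTQ n]
    exact lt_min (by have := hDnp n; have := hQpos n; linarith) (hEpos n)
  have claim4 : ∀ n : ℤ, 0 < TE n := by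
    intro n
    rw [hTE n]
    have h1 : TQ n ≤ E n := by rw [hTQ n]; exact min_le_right _ _
    have := hQpos (n+1)
    linarith
  -- claim 2
  have key : ∀ c : ℤ, ∑ ℓ ∈ Finset.Icc (1:ℤ) (N:ℤ), Q (c - ℓ)
      = ∑ n ∈ Finset.Icc (1:ℤ) (N:ℤ), Q n := by
    intro c
    rw [iccRange (fun ℓ => Q (c - ℓ)) N]
    rw [← windowConst N hN Q hQper c]
    apply Finset.sum_congr rfl
    intro j _
    show Q (c - ((j:ℤ)+1)) = Q (c - 1 - (j:ℤ))
    congr 1; ring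
  have hshift : ∑ n ∈ Finset.Icc (1:ℤ) (N:ℤ), Q (n+1)
      = ∑ n ∈ Finset.Icc (1:ℤ) (N:ℤ), Q n := by
    rw [reflSum N (fun ℓ => Q (ℓ+1))]
    calc ∑ ℓ ∈ Finset.Icc (1:ℤ) (N:ℤ), Q ((N:ℤ)+1-ℓ+1)
        = ∑ ℓ ∈ Finset.Icc (1:ℤ) (N:ℤ), Q (((N:ℤ)+2) - ℓ) := by
          apply Finset.sum_congr rfl
          intro ℓ _
          congr 1; ring
      _ = ∑ n ∈ Finset.Icc (1:ℤ) (N:ℤ), Q n := key ((N:ℤ)+2)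
  have claim2 : ∑ n ∈ Finset.Icc (1:ℤ) (N:ℤ), (TQ n + TE n) = L := by
    calc ∑ n ∈ Finset.Icc (1:ℤ) (N:ℤ), (TQ n + TE n)
        = ∑ n ∈ Finset.Icc (1:ℤ) (N:ℤ), (E n + Q (n+1)) :=
          Finset.sum_congr rfl (fun n _ => by rw [hTE n]; ring)
      _ = (∑ n ∈ Finset.Icc (1:ℤ) (N:ℤ), E n)
          + ∑ n ∈ Finset.Icc (1:ℤ) (N:ℤ), Q (n+1) := Finset.sum_add_distrib
      _ = L := by rw [hshift]; rw [hsplit] at hsum; linarith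
  exact ⟨claim1, claim2, claim3, claim4⟩
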